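/- If P is a homogeneous prime ideal in a polynomial ring S = k[x_1,...,x_n] with a monomial order, and f ∈ P is a nonzero homogeneous polynomial whose initial monomial in(f) is a minimal generator of the initial ideal in(P), then f is irreducible. -/

import Mathlib

open MvPolynomial Finsupp Module

namespace Paper

variable {k : Type*} [Field k] {n : ℕ}

/-- `J` is a monomial ideal: generated by a set of monomials. -/
def IsMonomialIdeal (J : Ideal (MvPolynomial (Fin n) k)) : Prop :=
  ∃ G : Set (Fin n →₀ ℕ),
    J = Ideal.span ((fun d => (monomial d (1:k) : MvPolynomial (Fin n) k)) '' G)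

/-- The Borel-type condition: for `i < j` and a monomial `x^d ∈ J` with `x_j ∣ x^d`,
some `x_i^s · x^d / x_j` lies in `J`. -/
def BorelCond (J : Ideal (MvPolynomial (Fin n) k)) : Prop :=
  ∀ i j : Fin n, i < j → ∀ d : Fin n →₀ ℕ,
    (monomial d (1:k) : MvPolynomial (Fin n) k) ∈ J → d j ≠ 0 →
    ∃ s : ℕ,
      (monomial (d + Finsupp.single i s - Finsupp.single j 1) (1:k) :
        MvPolynomial (Fin n) k) ∈ J

/-- `J` is a monomial ideal of Borel type. -/
def IsBorelType (J : Ideal (MvPolynomial (Fin n) k)) : Prop :=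
  IsMonomialIdeal J ∧ BorelCond J

/-- The saturation `J : I^∞`. -/
noncomputable def sat (J I : Ideal (MvPolynomial (Fin n) k)) : Ideal (MvPolynomial (Fin n) k) :=
  ⨆ m : ℕ, Submodule.colon J ((I ^ m) : Ideal (MvPolynomial (Fin n) k))

/-- The product of the variables with (0-based) index `≥ r`, i.e. `x_{r+1} ⋯ x_n`. -/
noncomputable def tailProd (k : Type*) [Field k] (n r : ℕ) : MvPolynomial (Fin n) k :=
  ∏ i ∈ Finset.univ.filter (fun i : Fin n => r ≤ (i : ℕ)), X i

/-- `Φ_r(J) = J : (x_{r+1} ⋯ x_n)^∞`. -/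
noncomputable def Phi (r : ℕ) (J : Ideal (MvPolynomial (Fin n) k)) :
    Ideal (MvPolynomial (Fin n) k) :=
  sat J (Ideal.span {tailProd k n r})

/-- The projection `Π_r : k[x_1,…,x_n] → k[x_1,…,x_r]` sending `x_{r+1},…,x_n` to `0`. -/
noncomputable def projDown (k : Type*) [Field k] (n r : ℕ) :
    MvPolynomial (Fin n) k →ₐ[k] MvPolynomial (Fin r) k :=
  aeval (fun i : Fin n => if h : (i : ℕ) < r then X ⟨i, h⟩ else 0)

/-- `Π_r(J)`, the image ideal of `J` in `k[x_1,…,x_r]`. -/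
noncomputable def PiIdeal (r : ℕ) (J : Ideal (MvPolynomial (Fin n) k)) :
    Ideal (MvPolynomial (Fin r) k) :=
  J.map (projDown k n r).toRingHom

/-- The exponent `d` is a minimal generator of the monomial ideal `J`. -/
def IsMinGen (J : Ideal (MvPolynomial (Fin n) k)) (d : Fin n →₀ ℕ) : Prop :=
  (monomial d (1:k) : MvPolynomial (Fin n) k) ∈ J ∧
    ∀ d' : Fin n →₀ ℕ, d' ≤ d →
      (monomial d' (1:k) : MvPolynomial (Fin n) k) ∈ J → d' = d

/-- The leading exponent of a polynomial with respect to a monomial order. -/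
noncomputable def leadExp (m : MonomialOrder (Fin n)) (f : MvPolynomial (Fin n) k) :
    Fin n →₀ ℕ :=
  m.toSyn.symm (f.support.sup fun d => m.toSyn d)

/-- The initial ideal of `P` with respect to the monomial order `m`. -/
noncomputable def initialIdeal (m : MonomialOrder (Fin n)) (P : Ideal (MvPolynomial (Fin n) k)) :
    Ideal (MvPolynomial (Fin n) k) :=
  Ideal.span {g | ∃ f ∈ P, f ≠ 0 ∧ g = (monomial (leadExp m f) (1:k) : MvPolynomial (Fin n) k)}

/-- A homogeneous ideal: closed under taking homogeneous components. -/
def IsHomogIdeal (P : Ideal (MvPolynomial (Fin n) k)) : Prop :=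
  ∀ f ∈ P, ∀ i : ℕ, homogeneousComponent i f ∈ P

/-- The ideal generated by the variables `x_1, …, x_{i+1}` (0-based indices `≤ i`). -/
noncomputable def varIdealLe (k : Type*) [Field k] {n : ℕ} (i : Fin n) :
    Ideal (MvPolynomial (Fin n) k) :=
  Ideal.span ((fun j : Fin n => (X j : MvPolynomial (Fin n) k)) '' {j | j ≤ i})

/-- The Hilbert series of `S/I` as a power series with integer coefficients. -/
noncomputable def hilb {N : ℕ} (I : Ideal (MvPolynomial (Fin N) k)) : PowerSeries ℤ :=
  PowerSeries.mk fun i =>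
    (Module.finrank k (Submodule.map (Ideal.Quotient.mkₐ k I).toLinearMap
      (homogeneousSubmodule (Fin N) k i)) : ℤ)

/-- The `i`-th Hilbert coefficient read off from the numerator polynomial `q`:
the coefficient of `(t-1)^i` in `q`. -/
noncomputable def hc (q : Polynomial ℤ) (i : ℕ) : ℤ :=
  (Polynomial.taylor 1 q).coeff i

/-- The Krull dimension of the quotient ring `S/I`. -/
noncomputable def qdim {N : ℕ} (I : Ideal (MvPolynomial (Fin N) k)) : WithBot (WithTop ℕ) :=
  ringKrullDim (MvPolynomial (Fin N) k ⧸ I)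

/-- The embedding `k[x_1,…,x_r] → k[x_1,…,x_n]`. -/
noncomputable def inclUp (k : Type*) [Field k] {r n : ℕ} (h : r ≤ n) :
    MvPolynomial (Fin r) k →ₐ[k] MvPolynomial (Fin n) k :=
  rename (Fin.castLE h)

/-- The embedding of variables for the tail subring `k[x_{r+1},…,x_n]`. -/
def tailEmb (n r : ℕ) (h : r ≤ n) : Fin (n - r) → Fin n :=
  fun j => ⟨r + j.1, by omega⟩

/-- The inclusion `k[x_{r+1},…,x_n] → k[x_1,…,x_n]` as a ring hom. -/
noncomputable def tailIncl (k : Type*) [Field k] {n : ℕ} (r : ℕ) (h : r ≤ n) :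
    MvPolynomial (Fin (n - r)) k →+* MvPolynomial (Fin n) k :=
  (rename (tailEmb n r h)).toRingHom

/-- `J₁ = (J ∩ k[x_1,…,x_r])S`: the ideal generated by the monomials of `J`
lying in `k[x_1,…,x_r]`. -/
noncomputable def Jone (r : ℕ) (J : Ideal (MvPolynomial (Fin n) k)) :
    Ideal (MvPolynomial (Fin n) k) :=
  Ideal.span {g | ∃ d : Fin n →₀ ℕ, (∀ i : Fin n, r ≤ (i : ℕ) → d i = 0) ∧
    (monomial d (1:k) : MvPolynomial (Fin n) k) ∈ J ∧
    g = (monomial d (1:k) : MvPolynomial (Fin n) k)}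

/-- The quotient module `J₂/J₁` for ideals `J₁ ≤ J₂`. -/
abbrev quotMod (J₁ J₂ : Ideal (MvPolynomial (Fin n) k)) :=
  (J₂ : Submodule (MvPolynomial (Fin n) k) (MvPolynomial (Fin n) k)) ⧸
    (Submodule.comap
      (J₂ : Submodule (MvPolynomial (Fin n) k) (MvPolynomial (Fin n) k)).subtype
      (J₁ : Submodule (MvPolynomial (Fin n) k) (MvPolynomial (Fin n) k)))

/-- `J₂/J₁` as a module over `k[x_{r+1},…,x_n]`. -/
noncomputable def quotModTail (r : ℕ) (h : r ≤ n) (J₁ J₂ : Ideal (MvPolynomial (Fin n) k)) :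
    Module (MvPolynomial (Fin (n - r)) k) (quotMod J₁ J₂) :=
  Module.compHom _ (tailIncl k r h)

/-- The degrevlex property of a monomial order: compare total degrees first, and break
ties by the *last* variable in which the exponents differ, where *larger* exponent
means *smaller* monomial. -/
def IsDegRevLex (m : MonomialOrder (Fin n)) : Prop :=
  ∀ a b : Fin n →₀ ℕ, (m.toSyn a < m.toSyn b) ↔
    ((a.sum fun _ e => e) < (b.sum fun _ e => e) ∨
      ((a.sum fun _ e => e) = (b.sum fun _ e => e) ∧
        ∃ i : Fin n, b i < a i ∧ ∀ j : Fin n, i < j → a j = b j))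

end Paper

open Paper MvPolynomial

set_option maxHeartbeats 1000000

namespace StmtZeroAux

variable {k : Type*} [Field k] {n : ℕ} (m : MonomialOrder (Fin n))

lemma le_leadExp {f : MvPolynomial (Fin n) k} {d : Fin n →₀ ℕ} (hd : d ∈ f.support) :
    m.toSyn d ≤ m.toSyn (leadExp m f) := by
  rw [leadExp, AddEquiv.apply_symm_apply]
  exact Finset.le_sup hd

lemma leadExp_mem_support {f : MvPolynomial (Fin n) k} (hf : f ≠ 0) :
    leadExp m f ∈ f.support := by
  obtain ⟨d, hd, hsup⟩ := Finset.exists_mem_eq_sup f.support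
    (MvPolynomial.support_nonempty.mpr hf) (fun d => m.toSyn d)
  rw [leadExp, hsup]
  simpa using hd

lemma coeff_mul_leadExp (f g : MvPolynomial (Fin n) k) :
    coeff (leadExp m f + leadExp m g) (f * g)
      = coeff (leadExp m f) f * coeff (leadExp m g) g := by
  rw [coeff_mul]
  apply Finset.sum_eq_single (leadExp m f, leadExp m g)
  · rintro ⟨u, v⟩ hp hne
    have hp : u + v = leadExp m f + leadExp m g := by simpa using hp
    by_contra hc
    have hu : u ∈ f.support := by
      rw [MvPolynomial.mem_support_iff]; intro h; exact hc (by simp [h])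
    have hv : v ∈ g.support := by
      rw [MvPolynomial.mem_support_iff]; intro h; exact hc (by simp [h])
    have h1 := le_leadExp m hu
    have h2 := le_leadExp m hv
    have hsum : m.toSyn u + m.toSyn v
        = m.toSyn (leadExp m f) + m.toSyn (leadExp m g) := by
      rw [← map_add, ← map_add, hp]
    have hu' : m.toSyn (leadExp m f) ≤ m.toSyn u := by
      have : m.toSyn (leadExp m f) + m.toSyn (leadExp m g)
          ≤ m.toSyn u + m.toSyn (leadExp m g) := by
        rw [← hsum]; exact add_le_add_right h2 _
      exact le_of_add_le_add_right this
    have hueq : u = leadExp m f := m.toSyn.injective (le_antisymm h1 hu')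
    have hveq : v = leadExp m g := by
      apply m.toSyn.injective
      have := hsum
      rw [hueq] at this
      exact add_left_cancel this
    exact hne (by rw [hueq, hveq])
  · intro h
    simp [Finset.mem_antidiagonal] at h

lemma leadExp_mul {f g : MvPolynomial (Fin n) k} (hf : f ≠ 0) (hg : g ≠ 0) :
    leadExp m (f * g) = leadExp m f + leadExp m g := by
  classical
  apply m.toSyn.injective
  apply le_antisymm
  · have hmem := leadExp_mem_support m (mul_ne_zero hf hg)
    have := MvPolynomial.support_mul f g hmem
    obtain ⟨u, hu, v, hv, huv⟩ := Finset.mem_add.mp this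
    rw [← huv, map_add, map_add]
    exact add_le_add (le_leadExp m hu) (le_leadExp m hv)
  · apply le_leadExp
    rw [MvPolynomial.mem_support_iff, coeff_mul_leadExp]
    exact mul_ne_zero (MvPolynomial.mem_support_iff.mp (leadExp_mem_support m hf))
      (MvPolynomial.mem_support_iff.mp (leadExp_mem_support m hg))

lemma isUnit_of_leadExp_eq_zero {f : MvPolynomial (Fin n) k} (hf : f ≠ 0)
    (h : leadExp m f = 0) : IsUnit f := by
  have hsupp : ∀ d ∈ f.support, d = 0 := by
    intro d hd
    have hle := le_leadExp m hd
    rw [h, map_zero] at hle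
    have h0 : m.toSyn d = 0 := le_antisymm hle (by
      rw [← m.bot_eq_zero]; exact bot_le)
    exact m.toSyn.injective (by rw [h0, map_zero] : m.toSyn d = m.toSyn 0)
  have hfc : f = C (coeff 0 f) := by
    ext d
    rcases eq_or_ne d 0 with rfl | hd
    · simp
    · rw [coeff_C, if_neg (Ne.symm hd)]
      by_contra hc
      exact hd (hsupp d (MvPolynomial.mem_support_iff.mpr hc))
  have hc0 : coeff 0 f ≠ 0 := by
    intro h0; rw [h0, map_zero] at hfc; exact hf hfc
  rw [hfc]
  exact (isUnit_iff_ne_zero.mpr hc0).map MvPolynomial.C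

lemma mem_initialIdeal {P : Ideal (MvPolynomial (Fin n) k)}
    {g : MvPolynomial (Fin n) k} (hg : g ∈ P) (hg0 : g ≠ 0) :
    (monomial (leadExp m g) (1:k) : MvPolynomial (Fin n) k) ∈ initialIdeal m P :=
  Ideal.subset_span ⟨g, hg, hg0, rfl⟩

end StmtZeroAux

/-- If `P` is a homogeneous prime ideal and `f ∈ P` is a nonzero
homogeneous polynomial whose initial monomial is a minimal generator of the initial
ideal `in(P)`, then `f` is irreducible. -/
theorem stmt0 {k : Type*} [Field k] {n : ℕ} (m : MonomialOrder (Fin n))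
    (P : Ideal (MvPolynomial (Fin n) k)) (hP : P.IsPrime) (hPhom : IsHomogIdeal P)
    (f : MvPolynomial (Fin n) k) (hfP : f ∈ P) (hf0 : f ≠ 0)
    (D : ℕ) (hfhom : f.IsHomogeneous D)
    (hmin : IsMinGen (initialIdeal m P) (leadExp m f)) :
    Irreducible f := by
  open StmtZeroAux in
  constructor
  · intro hu
    exact hP.ne_top (Ideal.eq_top_of_isUnit_mem P hfP hu)
  · intro a b hab
    have ha0 : a ≠ 0 := by rintro rfl; exact hf0 (by simp [hab])
    have hb0 : b ≠ 0 := by rintro rfl; exact hf0 (by simp [hab])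
    have hle : leadExp m f = leadExp m a + leadExp m b := by
      rw [hab]; exact leadExp_mul m ha0 hb0
    have hmem : a * b ∈ P := hab ▸ hfP
    rcases hP.mem_or_mem hmem with haP | hbP
    · right
      have h1 : leadExp m a ≤ leadExp m f := by rw [hle]; exact le_self_add
      have h2 := hmin.2 (leadExp m a) h1 (mem_initialIdeal m haP ha0)
      have h3 : leadExp m b = 0 := by
        have h4 : leadExp m a = leadExp m a + leadExp m b := h2.trans hle
        exact (left_eq_add.mp h4)
      exact isUnit_of_leadExp_eq_zero m hb0 h3
    · left
      have h1 : leadExp m b ≤ leadExp m f := by rw [hle]; exact le_add_self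
      have h2 := hmin.2 (leadExp m b) h1 (mem_initialIdeal m hbP hb0)
      have h3 : leadExp m a = 0 := by
        have h4 : leadExp m b = leadExp m a + leadExp m b := h2.trans hle
        exact (right_eq_add.mp h4)
      exact isUnit_of_leadExp_eq_zero m ha0 h3
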